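/- Let A = [I Φ] be an M×(N+M) matrix satisfying the RIP of order K+D with constant δ ∈ (0, 1/2). Then for every Γ ⊂ {1,…,M} with |Γ| ≥ M−D, the row-submatrix Φ^Γ satisfies the RIP of order K with constant δ/(1−δ). In other words, A having the RIP of order K+D implies Φ is (M−D, K, δ/(1−δ))-democratic. -/

import Mathlib

/-- Squared Euclidean norm of a vector. -/
def sqnorm {n : Type*} [Fintype n] (x : n → ℝ) : ℝ := ∑ i, x i ^ 2

/-- A matrix `A` satisfies the restricted isometry property (RIP) of order `K`
with constant `δ` if `(1-δ)‖x‖² ≤ ‖Ax‖² ≤ (1+δ)‖x‖²` for all `K`-sparse `x`. -/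
def RIP {m n : Type*} [Fintype m] [Fintype n] (A : Matrix m n ℝ) (K : ℕ) (δ : ℝ) : Prop :=
  ∀ x : n → ℝ, (Function.support x).ncard ≤ K →
    (1 - δ) * sqnorm x ≤ sqnorm (A.mulVec x) ∧ sqnorm (A.mulVec x) ≤ (1 + δ) * sqnorm x

lemma sqnorm_nonneg {n : Type*} [Fintype n] (x : n → ℝ) : 0 ≤ sqnorm x :=
  Finset.sum_nonneg fun i _ => sq_nonneg _

lemma support_sum_elim_ncard {m n : Type*} [Fintype m] [Fintype n]
    (u : m → ℝ) (x : n → ℝ) :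
    (Function.support (Sum.elim u x)).ncard ≤
      (Function.support u).ncard + (Function.support x).ncard := by
  have hsub : Function.support (Sum.elim u x) ⊆
      (Sum.inl '' Function.support u) ∪ (Sum.inr '' Function.support x) := by
    intro i hi
    cases i with
    | inl a => exact Or.inl ⟨a, hi, rfl⟩
    | inr b => exact Or.inr ⟨b, hi, rfl⟩
  calc (Function.support (Sum.elim u x)).ncard
      ≤ ((Sum.inl '' Function.support u) ∪ (Sum.inr '' Function.support x)).ncard :=
        Set.ncard_le_ncard hsub (Set.toFinite _)
    _ ≤ (Sum.inl '' Function.support u).ncard + (Sum.inr '' Function.support x).ncard :=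
        Set.ncard_union_le _ _
    _ = (Function.support u).ncard + (Function.support x).ncard := by
        rw [Set.ncard_image_of_injective _ Sum.inl_injective,
          Set.ncard_image_of_injective _ Sum.inr_injective]

/-- If `A = [I Φ]` satisfies the RIP of order `K + D` with constant `δ ∈ (0,1/2)`,
then `Φ` is `(M-D, K, δ/(1-δ))`-democratic: every row-submatrix `Φ^Γ` with
`|Γ| ≥ M - D` satisfies the RIP of order `K` with constant `δ/(1-δ)`. -/
theorem rip_implies_democratic {M N K D : ℕ} (Φ : Matrix (Fin M) (Fin N) ℝ) (δ : ℝ)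
    (hδ : δ ∈ Set.Ioo (0 : ℝ) (1/2))
    (hA : RIP (Matrix.fromCols (1 : Matrix (Fin M) (Fin M) ℝ) Φ) (K + D) δ) :
    ∀ Γ : Finset (Fin M), M - D ≤ Γ.card →
      RIP (Φ.submatrix (Subtype.val : {i // i ∈ Γ} → Fin M) id) K (δ / (1 - δ)) := by
  obtain ⟨hδ0, hδ2⟩ := hδ
  have h1δ : (0:ℝ) < 1 - δ := by linarith
  have hdd : δ ≤ δ / (1 - δ) := by
    rw [le_div_iff₀ h1δ]; nlinarith
  intro Γ hΓ x hx
  set y := Φ.mulVec x with hy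
  -- the target vector
  have htarget : (Φ.submatrix (Subtype.val : {i // i ∈ Γ} → Fin M) id).mulVec x
      = fun j : {i // i ∈ Γ} => y (j : Fin M) := by
    ext j
    simp [Matrix.mulVec, Matrix.submatrix, dotProduct, hy]
  have htsq : sqnorm ((Φ.submatrix (Subtype.val : {i // i ∈ Γ} → Fin M) id).mulVec x)
      = ∑ i ∈ Γ, y i ^ 2 := by
    rw [htarget]
    unfold sqnorm
    exact Finset.sum_coe_sort Γ (fun i => y i ^ 2)
  have hxnn := sqnorm_nonneg x
  have hynn : ∀ i, (0:ℝ) ≤ y i ^ 2 := fun i => sq_nonneg _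
  constructor
  · -- lower bound, via u = -y on Γᶜ
    set u : Fin M → ℝ := fun i => if i ∈ Γ then 0 else -(y i) with hu
    have hAw : (Matrix.fromCols 1 Φ).mulVec (Sum.elim u x)
        = fun i => if i ∈ Γ then y i else 0 := by
      ext i
      rw [Matrix.fromCols_mulVec_sumElim]
      by_cases h : i ∈ Γ <;> simp [Matrix.one_mulVec, hu, h, hy]
    have hucard : (Function.support u).ncard ≤ D := by
      have hsub : Function.support u ⊆ ↑(Γᶜ) := by
        intro i hi
        by_cases h : i ∈ Γ
        · simp [hu, h] at hi
        · simpa using h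
      calc (Function.support u).ncard ≤ (↑(Γᶜ) : Set (Fin M)).ncard :=
            Set.ncard_le_ncard hsub (Set.toFinite _)
        _ = (Γᶜ).card := Set.ncard_coe_finset _
        _ ≤ D := by
            rw [Finset.card_compl, Fintype.card_fin]
            exact Nat.sub_le_iff_le_add.mpr (by omega)
    have hcard : (Function.support (Sum.elim u x)).ncard ≤ K + D := by
      calc (Function.support (Sum.elim u x)).ncard
          ≤ (Function.support u).ncard + (Function.support x).ncard :=
            support_sum_elim_ncard u x
        _ ≤ D + K := Nat.add_le_add hucard hx
        _ = K + D := Nat.add_comm D K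
    have hrip := (hA (Sum.elim u x) hcard).1
    have hsq : sqnorm (Sum.elim u x) = sqnorm u + sqnorm x := by
      unfold sqnorm
      rw [Fintype.sum_sum_type]
      simp
    have hAsq : sqnorm ((Matrix.fromCols 1 Φ).mulVec (Sum.elim u x))
        = ∑ i ∈ Γ, y i ^ 2 := by
      rw [hAw]
      unfold sqnorm
      simp [ite_pow, Finset.sum_ite_mem]
    rw [hsq, hAsq] at hrip
    have hunn := sqnorm_nonneg u
    rw [htsq]
    nlinarith [hrip]
  · -- upper bound, via Sum.elim 0 x
    have hAw : (Matrix.fromCols 1 Φ).mulVec (Sum.elim (0 : Fin M → ℝ) x) = y := by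
      rw [Matrix.fromCols_mulVec_sumElim]
      simp [hy]
    have hcard : (Function.support (Sum.elim (0 : Fin M → ℝ) x)).ncard ≤ K + D := by
      calc (Function.support (Sum.elim (0 : Fin M → ℝ) x)).ncard
          ≤ (Function.support (0 : Fin M → ℝ)).ncard + (Function.support x).ncard :=
            support_sum_elim_ncard _ x
        _ ≤ 0 + K := by
            simpa [Function.support_zero] using hx
        _ ≤ K + D := by omega
    have hrip := (hA (Sum.elim (0 : Fin M → ℝ) x) hcard).2
    have hsq : sqnorm (Sum.elim (0 : Fin M → ℝ) x) = sqnorm x := by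
      unfold sqnorm
      rw [Fintype.sum_sum_type]
      simp
    rw [hsq, hAw] at hrip
    have hsum : (∑ i ∈ Γ, y i ^ 2) ≤ sqnorm y := by
      unfold sqnorm
      exact Finset.sum_le_sum_of_subset_of_nonneg (Finset.subset_univ Γ)
        (fun i _ _ => hynn i)
    rw [htsq]
    calc (∑ i ∈ Γ, y i ^ 2) ≤ sqnorm y := hsum
      _ ≤ (1 + δ) * sqnorm x := hrip
      _ ≤ (1 + δ / (1 - δ)) * sqnorm x := by nlinarith
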